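/- Suppose in addition that: (i) q is continuous and positive on ℝ; (ii) there exist a ≥ 1, b > 0 and a bounded interval (α,β) such that for every x ∉ (α,β) and every t with |t−x| ≤ b·r(x)/q(x) one has 1/a ≤ r(t)/r(x) ≤ a and 1/a ≤ q(t)/q(x) ≤ a; (iii) a²·exp(−b/a²) ≤ 1/3. Then the boundary value problem −r(x)y′(x)+q(x)y(x)=f(x), lim_{|x|→∞} y(x)=0, is correctly solvable in C(ℝ) if and only if q(x) → ∞ as |x| → ∞. -/

import Mathlib

open MeasureTheory Filter Set Real
open scoped ENNReal NNReal

noncomputable section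

/-- `y` is a solution of the boundary value problem `-r·y' + q·y = f` on `ℝ` with
`y → 0` at `±∞`: `y` is continuous, locally absolutely continuous (encoded through the
integral identity, i.e. `y` is the integral of its a.e. derivative `(q·y - f)/r`),
and tends to `0` at both infinities. -/
def IsSolution (r q f y : ℝ → ℝ) : Prop :=
  Continuous y ∧
  (∀ a b : ℝ, y b - y a = ∫ t in a..b, (q t * y t - f t) / r t) ∧
  Tendsto y atBot (nhds 0) ∧ Tendsto y atTop (nhds 0)

/-- Correct solvability of the problem `-r·y' + q·y = f`, `y(±∞) = 0`, in `C(ℝ)`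
(bounded continuous functions with the sup-norm): for every bounded continuous `f`
there is a unique solution `y` (such a solution is automatically bounded and
continuous), and `sup|y| ≤ c·sup|f|` with a constant `c ∈ (0,∞)` independent of `f`. -/
def CorrectlySolvableC (r q : ℝ → ℝ) : Prop :=
  ∃ c : ℝ, 0 < c ∧
    ∀ f : ℝ → ℝ, Continuous f → (∃ M : ℝ, ∀ x, |f x| ≤ M) →
      (∃! y : ℝ → ℝ, IsSolution r q f y) ∧
      ∀ y : ℝ → ℝ, IsSolution r q f y → ∀ x, |y x| ≤ c * ⨆ t, |f t|



/-- Generic chaining lemma: a monotone function that can always gain `δ` goes to `∞`. -/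
lemma chain_tendsto {F : ℝ → ℝ} (mono : Monotone F) {X δ : ℝ} (hδ : 0 < δ)
    (h : ∀ x, X ≤ x → ∃ z, x ≤ z ∧ F x + δ ≤ F z) : Tendsto F atTop atTop := by
  have key : ∀ n : ℕ, ∃ x, X ≤ x ∧ F X + n * δ ≤ F x := by
    intro n
    induction n with
    | zero => exact ⟨X, le_rfl, by simp⟩
    | succ n ih =>
      obtain ⟨x, hXx, hFx⟩ := ih
      obtain ⟨z, hxz, hFz⟩ := h x hXx
      exact ⟨z, hXx.trans hxz, by push_cast; nlinarith⟩
  rw [tendsto_atTop]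
  intro M
  obtain ⟨n, hn⟩ := exists_nat_ge ((M - F X) / δ)
  obtain ⟨x, hXx, hFx⟩ := key n
  rw [div_le_iff₀ hδ] at hn
  filter_upwards [eventually_ge_atTop x] with z hz
  have := mono hz
  linarith

section Aux
variable (r q : ℝ → ℝ)

/-- The antiderivative of `q/r` vanishing at `0`. -/
def Qf : ℝ → ℝ := fun x => ∫ t in (0:ℝ)..x, q t / r t

variable {r q} (hr : Continuous r) (hrpos : ∀ x, 0 < r x)
  (hqc : Continuous q) (hqpos : ∀ x, 0 < q x)

include hr hrpos hqc in
lemma cont_qr : Continuous fun t => q t / r t :=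
  hqc.div hr (fun x => (hrpos x).ne')

include hr hrpos hqc in
lemma Qf_hasDerivAt (x : ℝ) : HasDerivAt (Qf r q) (q x / r x) x := by
  exact intervalIntegral.integral_hasDerivAt_right
    ((cont_qr hr hrpos hqc).intervalIntegrable 0 x)
    ((cont_qr hr hrpos hqc).stronglyMeasurable.stronglyMeasurableAtFilter)
    (cont_qr hr hrpos hqc).continuousAt

include hr hrpos hqc hqpos in
lemma Qf_strictMono : StrictMono (Qf r q) := by
  apply strictMono_of_deriv_pos
  intro x
  rw [(Qf_hasDerivAt hr hrpos hqc x).deriv]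
  exact div_pos (hqpos x) (hrpos x)

include hr hrpos hqc in
lemma Qf_sub (u v : ℝ) : Qf r q v - Qf r q u = ∫ t in u..v, q t / r t := by
  have h := fun s t : ℝ => ((cont_qr hr hrpos hqc).intervalIntegrable s t : IntervalIntegrable _ volume s t)
  rw [Qf, Qf, intervalIntegral.integral_interval_sub_left (h 0 v) (h 0 u)]


section Cond
variable {a b α β : ℝ} (ha : 1 ≤ a) (hb : 0 < b)
  (hcond : ∀ x, x ∉ Set.Ioo α β → ∀ t, |t - x| ≤ b * r x / q x →
    1 / a ≤ r t / r x ∧ r t / r x ≤ a ∧ 1 / a ≤ q t / q x ∧ q t / q x ≤ a)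

include hrpos hqpos ha hcond in
lemma cond_bounds {x : ℝ} (hx : x ∉ Set.Ioo α β) {t : ℝ} (ht : |t - x| ≤ b * r x / q x) :
    r t ≤ a * r x ∧ r x / a ≤ r t ∧ q t ≤ a * q x ∧ q x / a ≤ q t := by
  obtain ⟨h1, h2, h3, h4⟩ := hcond x hx t ht
  have hrx := hrpos x
  have hqx := hqpos x
  have ha0 : 0 < a := lt_of_lt_of_le one_pos ha
  constructor
  · calc r t = (r t / r x) * r x := by field_simp
    _ ≤ a * r x := by nlinarith
  constructor
  · rw [div_le_iff₀ ha0]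
    calc r x = (r x / r t) * r t := by field_simp [(hrpos t).ne']
    _ ≤ a * (r t * 1) := by
        rw [mul_one]
        have : 1/a ≤ r t / r x := h1
        have h5 : r x / r t ≤ a := by
          rw [div_le_iff₀ (hrpos t)]
          rw [div_le_div_iff₀ ha0 hrx] at this
          nlinarith
        nlinarith [hrpos t]
    _ = r t * a := by ring
  constructor
  · calc q t = (q t / q x) * q x := by field_simp
    _ ≤ a * q x := by nlinarith
  · rw [div_le_iff₀ ha0]
    have : 1/a ≤ q t / q x := h3
    rw [div_le_div_iff₀ ha0 hqx] at this
    nlinarith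

include hrpos hqpos ha hcond in
lemma qr_lower {x : ℝ} (hx : x ∉ Set.Ioo α β) {t : ℝ} (ht : |t - x| ≤ b * r x / q x) :
    q x / (a^2 * r x) ≤ q t / r t := by
  obtain ⟨hra, -, -, hqa⟩ := cond_bounds hrpos hqpos ha hcond hx ht
  have ha0 : 0 < a := lt_of_lt_of_le one_pos ha
  have hrx := hrpos x; have hqx := hqpos x
  have hrt := hrpos t; have hqt := hqpos t
  rw [div_le_div_iff₀ (by positivity) hrt]
  have h1 : q x / a ≤ q t := hqa
  rw [div_le_iff₀ ha0] at h1
  nlinarith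

include hrpos hqpos ha hcond in
lemma qr_upper {x : ℝ} (hx : x ∉ Set.Ioo α β) {t : ℝ} (ht : |t - x| ≤ b * r x / q x) :
    q t / r t ≤ a^2 * q x / r x := by
  obtain ⟨-, hra, hqa, -⟩ := cond_bounds hrpos hqpos ha hcond hx ht
  have ha0 : 0 < a := lt_of_lt_of_le one_pos ha
  have hrx := hrpos x; have hqx := hqpos x
  have hrt := hrpos t; have hqt := hqpos t
  rw [div_le_div_iff₀ hrt hrx]
  have h1 : r x / a ≤ r t := hra
  rw [div_le_iff₀ ha0] at h1
  nlinarith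


include hr hrpos hqc hqpos ha hb hcond in
lemma Qf_int_ge {x : ℝ} (hx : x ∉ Set.Ioo α β) {u v : ℝ} (huv : u ≤ v)
    (hsub : ∀ t ∈ Set.Icc u v, |t - x| ≤ b * r x / q x) :
    (v - u) * q x / (a^2 * r x) ≤ Qf r q v - Qf r q u := by
  rw [Qf_sub hr hrpos hqc u v]
  have hmono : ∫ t in u..v, (q x / (a^2 * r x)) ≤ ∫ t in u..v, q t / r t := by
    apply intervalIntegral.integral_mono_on huv (intervalIntegrable_const)
      ((cont_qr hr hrpos hqc).intervalIntegrable u v)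
    intro t ht
    exact qr_lower hrpos hqpos ha hcond hx (hsub t ht)
  simpa using hmono

include hr hrpos hqc hqpos ha hb hcond in
lemma Qf_step_right {x : ℝ} (hx : x ∉ Set.Ioo α β) :
    Qf r q x + b / a^2 ≤ Qf r q (x + b * r x / q x) := by
  have hd : 0 < b * r x / q x := div_pos (mul_pos hb (hrpos x)) (hqpos x)
  have ha0 : 0 < a := lt_of_lt_of_le one_pos ha
  have key := Qf_int_ge hr hrpos hqc hqpos ha hb hcond hx (le_of_lt (by linarith : x < x + b * r x / q x))
    (fun t ht => by
      rw [abs_le]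
      constructor <;> [linarith [ht.1]; linarith [ht.2]])
  have hrx : r x ≠ 0 := (hrpos x).ne'
  have hqx : q x ≠ 0 := (hqpos x).ne'
  have hane : a ≠ 0 := ha0.ne'
  have harith : (x + b * r x / q x - x) * q x / (a^2 * r x) = b / a^2 := by
    field_simp
    ring
  linarith [harith ▸ key]

include hr hrpos hqc hqpos ha hb hcond in
lemma Qf_step_left {x : ℝ} (hx : x ∉ Set.Ioo α β) :
    Qf r q (x - b * r x / q x) + b / a^2 ≤ Qf r q x := by
  have hd : 0 < b * r x / q x := div_pos (mul_pos hb (hrpos x)) (hqpos x)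
  have key := Qf_int_ge hr hrpos hqc hqpos ha hb hcond hx (le_of_lt (by linarith : x - b * r x / q x < x))
    (fun t ht => by
      rw [abs_le]
      constructor <;> [linarith [ht.1]; linarith [ht.2]])
  have ha0 : 0 < a := lt_of_lt_of_le one_pos ha
  have hrx : r x ≠ 0 := (hrpos x).ne'
  have hqx : q x ≠ 0 := (hqpos x).ne'
  have hane : a ≠ 0 := ha0.ne'
  have harith : (x - (x - b * r x / q x)) * q x / (a^2 * r x) = b / a^2 := by
    field_simp
    ring
  linarith [harith ▸ key]

include hr hrpos hqc hqpos ha hb hcond in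
lemma Qf_tendsto_atTop : Tendsto (Qf r q) atTop atTop := by
  have ha0 : 0 < a := lt_of_lt_of_le one_pos ha
  apply chain_tendsto (Qf_strictMono hr hrpos hqc hqpos).monotone
    (show (0:ℝ) < b / a^2 by positivity) (X := β)
  intro x hx
  have hd : 0 < b * r x / q x := div_pos (mul_pos hb (hrpos x)) (hqpos x)
  refine ⟨x + b * r x / q x, by linarith, ?_⟩
  exact Qf_step_right hr hrpos hqc hqpos ha hb hcond (by simp [Set.mem_Ioo]; intro h; linarith)

include hr hrpos hqc hqpos ha hb hcond in
lemma Qf_tendsto_atBot : Tendsto (Qf r q) atBot atBot := by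
  have ha0 : 0 < a := lt_of_lt_of_le one_pos ha
  have hneg : Tendsto (fun x => -(Qf r q (-x))) atTop atTop := by
    apply chain_tendsto (show Monotone fun x => -(Qf r q (-x)) from
      fun s t hst => neg_le_neg ((Qf_strictMono hr hrpos hqc hqpos).monotone (neg_le_neg hst)))
      (show (0:ℝ) < b / a^2 by positivity) (X := -α)
    intro x hx
    have hd : 0 < b * r (-x) / q (-x) := div_pos (mul_pos hb (hrpos (-x))) (hqpos (-x))
    refine ⟨x + b * r (-x) / q (-x), by linarith, ?_⟩
    have hstep := Qf_step_left hr hrpos hqc hqpos ha hb hcond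
      (x := -x) (by simp [Set.mem_Ioo]; intro h; linarith)
    have : -(x + b * r (-x) / q (-x)) = -x - b * r (-x) / q (-x) := by ring
    rw [this]
    linarith
  have : Tendsto (fun x => Qf r q x) atBot atBot := by
    have h1 : Tendsto (fun x : ℝ => -x) atBot atTop := tendsto_neg_atBot_atTop
    have h2 := (hneg.comp h1)
    have h3 : Tendsto (fun x : ℝ => -(Qf r q x)) atBot atTop := by
      refine h2.congr fun x => by simp
    simpa [Function.comp_def] using tendsto_neg_atTop_atBot.comp h3
  exact this

end Cond
end Aux

section Main
variable {r q : ℝ → ℝ} (hr : Continuous r) (hrpos : ∀ x, 0 < r x)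
  (hqc : Continuous q) (hqpos : ∀ x, 0 < q x)
  {a b α β : ℝ} (ha : 1 ≤ a) (hb : 0 < b)
  (hcond : ∀ x, x ∉ Set.Ioo α β → ∀ t, |t - x| ≤ b * r x / q x →
    1 / a ≤ r t / r x ∧ r t / r x ≤ a ∧ 1 / a ≤ q t / q x ∧ q t / q x ≤ a)

include hr hrpos hqc hqpos in
lemma E_hasDerivAt (x : ℝ) :
    HasDerivAt (fun s => Real.exp (-(Qf r q s))) (-(q x / r x) * Real.exp (-(Qf r q x))) x := by
  have h1 := ((Qf_hasDerivAt hr hrpos hqc x).neg).exp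
  simpa [mul_comm] using h1

include hr hrpos hqc hqpos in
/-- derivative of a solution, recovered from the integral identity -/
lemma sol_hasDerivAt {f y : ℝ → ℝ} (hf : Continuous f) (ycont : Continuous y)
    (yint : ∀ u v : ℝ, y v - y u = ∫ t in u..v, (q t * y t - f t) / r t) (x : ℝ) :
    HasDerivAt y ((q x * y x - f x) / r x) x := by
  have hgc : Continuous fun t => (q t * y t - f t) / r t :=
    ((hqc.mul ycont).sub hf).div hr fun t => (hrpos t).ne'
  have heq : y = fun v => y 0 + ∫ t in (0:ℝ)..v, (q t * y t - f t) / r t := by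
    funext v
    have := yint 0 v
    linarith
  have hd : HasDerivAt (fun v => ∫ t in (0:ℝ)..v, (q t * y t - f t) / r t)
      ((q x * y x - f x) / r x) x :=
    intervalIntegral.integral_hasDerivAt_right (hgc.intervalIntegrable 0 x)
      hgc.stronglyMeasurable.stronglyMeasurableAtFilter hgc.continuousAt
  have hd2 := hd.const_add (y 0)
  exact hd2.congr_of_eventuallyEq (Filter.Eventually.of_forall fun v => congrFun heq v)

include hr hrpos hqc hqpos ha hb hcond in
lemma forward_dir (hsolv : CorrectlySolvableC r q) :
    Tendsto q atTop atTop ∧ Tendsto q atBot atTop := by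
  classical
  obtain ⟨c, hc, H⟩ := hsolv
  obtain ⟨⟨y, hy, -⟩, -⟩ := H (fun _ => 1) continuous_const ⟨1, by simp⟩
  obtain ⟨ycont, yint, ybot, ytop⟩ := hy
  set Q := Qf r q with hQdef
  set E : ℝ → ℝ := fun s => Real.exp (-(Q s)) with hEdef
  have hEpos : ∀ s, 0 < E s := fun s => Real.exp_pos _
  have hQmono := (Qf_strictMono hr hrpos hqc hqpos).monotone
  have hyderiv : ∀ x, HasDerivAt y ((q x * y x - 1) / r x) x :=
    sol_hasDerivAt hr hrpos hqc hqpos continuous_const ycont yint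
  -- w = y * E is strictly decreasing with derivative -E/r
  set w : ℝ → ℝ := fun s => y s * E s with hwdef
  have hwderiv : ∀ x, HasDerivAt w (-(E x / r x)) x := by
    intro x
    have h1 := (hyderiv x).mul (E_hasDerivAt hr hrpos hqc hqpos x)
    convert h1 using 1
    have : r x ≠ 0 := (hrpos x).ne'
    show -(E x / r x) = (q x * y x - 1) / r x * E x + y x * (-(q x / r x) * E x)
    field_simp
    ring
    all_goals rfl
  -- Step A : y is positive everywhere
  have ypos : ∀ x, 0 < y x := by
    by_contra hcon
    push_neg at hcon
    obtain ⟨x₀, hx₀⟩ := hcon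
    have wanti : StrictAnti w := by
      apply strictAnti_of_deriv_neg
      intro x
      rw [(hwderiv x).deriv]
      have := hrpos x; have := hEpos x
      rw [neg_lt_zero]
      positivity
    have hw1 : w (x₀ + 1) < 0 := by
      have h1 : w (x₀ + 1) < w x₀ := wanti (by linarith)
      have h2 : w x₀ ≤ 0 := mul_nonpos_of_nonpos_of_nonneg hx₀ (hEpos x₀).le
      linarith
    set δ : ℝ := -(w (x₀ + 1) * Real.exp (Q (x₀ + 1))) with hδdef
    have hδpos : 0 < δ := by
      have := Real.exp_pos (Q (x₀ + 1))
      nlinarith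
    have hbound : ∀ x, x₀ + 1 ≤ x → y x ≤ -δ := by
      intro x hx
      have hEinv : y x = w x * Real.exp (Q x) := by
        rw [hwdef]
        simp only [hEdef]
        rw [mul_assoc, ← Real.exp_add]
        simp
      have hwle : w x ≤ w (x₀ + 1) := (wanti.antitone hx)
      have hexp : Real.exp (Q (x₀ + 1)) ≤ Real.exp (Q x) :=
        Real.exp_le_exp.2 (hQmono hx)
      rw [hEinv, hδdef]
      have h1 : w x * Real.exp (Q x) ≤ w (x₀ + 1) * Real.exp (Q x) :=
        mul_le_mul_of_nonneg_right hwle (Real.exp_pos _).le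
      have h2 : w (x₀ + 1) * Real.exp (Q x) ≤ w (x₀ + 1) * Real.exp (Q (x₀ + 1)) :=
        mul_le_mul_of_nonpos_left hexp hw1.le
      linarith
    have : ∀ᶠ x in atTop, |y x - 0| < δ := by
      have := Metric.tendsto_nhds.1 ytop δ hδpos
      simpa [Real.dist_eq] using this
    obtain ⟨x, hx1, hx2⟩ := ((this.and (eventually_ge_atTop (x₀ + 1))).exists)
    have := hbound x hx2
    rw [sub_zero, abs_lt] at hx1
    linarith
  have hQc : Continuous Q := by
    have hdiff : Differentiable ℝ Q := fun x => (Qf_hasDerivAt hr hrpos hqc x).differentiableAt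
    exact hdiff.continuous
  have hEc : Continuous E := Real.continuous_exp.comp hQc.neg
  have hErc : Continuous fun t => E t / r t := hEc.div hr fun t => (hrpos t).ne'
  -- Step B+C : quantitative lower bound for q * y outside (α, β)
  have keybd : ∀ x, x ∉ Set.Ioo α β → b * Real.exp (-(a^2*b)) / a ≤ q x * y x := by
    intro x hx
    have ha0 : 0 < a := lt_of_lt_of_le one_pos ha
    set d : ℝ := b * r x / q x with hddef
    have hd : 0 < d := div_pos (mul_pos hb (hrpos x)) (hqpos x)
    -- bound Q t - Q x ≤ a² b for t ∈ [x, x+d]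
    have hQub : ∀ t ∈ Set.Icc x (x + d), Q t - Q x ≤ a^2 * b := by
      intro t ht
      have habs : ∀ s ∈ Set.Icc x t, |s - x| ≤ b * r x / q x := by
        intro s hs
        rw [abs_le]
        exact ⟨by linarith [hs.1], by linarith [hs.2, ht.2]⟩
      rw [hQdef, Qf_sub hr hrpos hqc x t]
      have hxt : x ≤ t := ht.1
      have hmono2 : ∫ s in x..t, q s / r s ≤ ∫ s in x..t, (a^2 * q x / r x) := by
        apply intervalIntegral.integral_mono_on hxt
          ((cont_qr hr hrpos hqc).intervalIntegrable x t) intervalIntegrable_const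
        intro s hs
        exact qr_upper hrpos hqpos ha hcond hx (habs s hs)
      have hconst : ∫ s in x..t, (a^2 * q x / r x) = (t - x) * (a^2 * q x / r x) := by
        rw [intervalIntegral.integral_const, smul_eq_mul]
      rw [hconst] at hmono2
      have htd : t - x ≤ d := by linarith [ht.2]
      have : (t - x) * (a^2 * q x / r x) ≤ d * (a^2 * q x / r x) := by
        apply mul_le_mul_of_nonneg_right htd
        exact div_nonneg (by nlinarith [hqpos x] : (0:ℝ) ≤ a^2 * q x) (hrpos x).le
      have hrx : r x ≠ 0 := (hrpos x).ne'
      have hqx : q x ≠ 0 := (hqpos x).ne'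
      have hdc : d * (a^2 * q x / r x) = a^2 * b := by
        rw [hddef]
        field_simp
      linarith
    -- lower bound E t / r t on [x, x+d]
    have hEr : ∀ t ∈ Set.Icc x (x + d), E x * Real.exp (-(a^2*b)) / (a * r x) ≤ E t / r t := by
      intro t ht
      have habs : |t - x| ≤ b * r x / q x := by
        rw [abs_le]; exact ⟨by linarith [ht.1], by linarith [ht.2]⟩
      have hrt : r t ≤ a * r x := (cond_bounds hrpos hqpos ha hcond hx habs).1
      have hEt : E x * Real.exp (-(a^2*b)) ≤ E t := by
        rw [hEdef]
        simp only
        rw [← Real.exp_add]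
        apply Real.exp_le_exp.2
        have := hQub t ht
        linarith
      exact div_le_div₀ (hEpos t).le hEt (hrpos t) hrt
    -- integral lower bound and conclusion
    have hstep : ∀ u v : ℝ, u ≤ v → ∫ t in u..v, E t / r t ≤ y u * E u := by
      intro u v huv
      have hfint : ∫ t in u..v, E t / r t = w u - w v := by
        have hident := intervalIntegral.integral_eq_sub_of_hasDerivAt
          (f := fun s => -(w s)) (f' := fun s => E s / r s)
          (fun t _ => by have := (hwderiv t).neg; simp only [neg_neg] at this; exact this)
          ((hErc.intervalIntegrable u v))
        rw [hident]; ring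
      rw [hfint, hwdef]
      simp only
      have : 0 < y v * E v := mul_pos (ypos v) (hEpos v)
      linarith
    have hintlb : (x + d - x) * (E x * Real.exp (-(a^2*b)) / (a * r x)) ≤
        ∫ t in x..(x + d), E t / r t := by
      have h := intervalIntegral.integral_mono_on (by linarith : x ≤ x + d)
        intervalIntegrable_const
        (hErc.intervalIntegrable x (x+d) : IntervalIntegrable _ volume _ _) hEr
      rw [intervalIntegral.integral_const, smul_eq_mul] at h
      exact h
    have hfinal := le_trans hintlb (hstep x (x + d) (by linarith))
    -- arithmetic: (d) * (E x * exp(-(a²b))/(a r x)) = E x * (b exp(-(a²b))/(a q x))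
    have hrx : r x ≠ 0 := (hrpos x).ne'
    have hqx : q x ≠ 0 := (hqpos x).ne'
    have hEx : 0 < E x := hEpos x
    have hane : a ≠ 0 := ha0.ne'
    have harith : (x + d - x) * (E x * Real.exp (-(a^2*b)) / (a * r x)) =
        E x * (b * Real.exp (-(a^2*b)) / (a * q x)) := by
      rw [hddef]; field_simp; ring
    rw [harith] at hfinal
    -- divide by E x
    have h2 : b * Real.exp (-(a^2*b)) / (a * q x) ≤ y x :=
      le_of_mul_le_mul_right (by nlinarith [hfinal] :
        b * Real.exp (-(a^2*b)) / (a * q x) * E x ≤ y x * E x) hEx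
    have haq : (0:ℝ) < a * q x := mul_pos ha0 (hqpos x)
    rw [div_le_iff₀ haq] at h2
    rw [div_le_iff₀ ha0]
    nlinarith [h2]
  -- conclude both limits
  have hK : 0 < b * Real.exp (-(a^2*b)) / a := by
    have ha0 : 0 < a := lt_of_lt_of_le one_pos ha
    positivity
  set K := b * Real.exp (-(a^2*b)) / a with hKdef
  have hKle : ∀ x, x ∉ Set.Ioo α β → K ≤ q x * y x := by
    intro x hx
    have := keybd x hx
    rw [hKdef]
    linarith [this]
  constructor
  · rw [tendsto_atTop]
    intro M
    have hM' : 0 < max M 1 := lt_of_lt_of_le one_pos (le_max_right _ _)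
    have hev1 := Metric.tendsto_nhds.1 ytop (K / max M 1) (by positivity)
    filter_upwards [hev1, eventually_ge_atTop β] with x h1 h2
    rw [Real.dist_eq, sub_zero] at h1
    have hx : x ∉ Set.Ioo α β := by
      simp only [Set.mem_Ioo, not_and, not_lt]
      intro _; exact h2
    have h3 := hKle x hx
    rw [abs_lt] at h1
    have hyx := ypos x
    have hqx := hqpos x
    have h4 : y x * (max M 1) < K := (lt_div_iff₀ hM').1 h1.2
    have h5 : (max M 1) * y x < q x * y x := by nlinarith
    have h6 : max M 1 < q x := lt_of_mul_lt_mul_right h5 hyx.le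
    exact le_of_lt (lt_of_le_of_lt (le_max_left M 1) h6)
  · rw [tendsto_atTop]
    intro M
    have hM' : 0 < max M 1 := lt_of_lt_of_le one_pos (le_max_right _ _)
    have hev1 := Metric.tendsto_nhds.1 ybot (K / max M 1) (by positivity)
    filter_upwards [hev1, eventually_le_atBot α] with x h1 h2
    rw [Real.dist_eq, sub_zero] at h1
    have hx : x ∉ Set.Ioo α β := by
      simp only [Set.mem_Ioo, not_and, not_lt]
      intro h; linarith
    have h3 := hKle x hx
    rw [abs_lt] at h1
    have hyx := ypos x
    have hqx := hqpos x
    have h4 : y x * (max M 1) < K := (lt_div_iff₀ hM').1 h1.2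
    have h5 : (max M 1) * y x < q x * y x := by nlinarith
    have h6 : max M 1 < q x := lt_of_mul_lt_mul_right h5 hyx.le
    exact le_of_lt (lt_of_le_of_lt (le_max_left M 1) h6)

include hr hrpos hqc hqpos ha hb hcond in
lemma backward_dir (hT : Tendsto q atTop atTop) (hB : Tendsto q atBot atTop) :
    CorrectlySolvableC r q := by
  classical
  set Q := Qf r q with hQdef
  set E : ℝ → ℝ := fun s => Real.exp (-(Q s)) with hEdef
  have hEpos : ∀ s, 0 < E s := fun s => Real.exp_pos _
  have hQmono := (Qf_strictMono hr hrpos hqc hqpos).monotone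
  have hQc : Continuous Q := by
    have hdiff : Differentiable ℝ Q := fun x => (Qf_hasDerivAt hr hrpos hqc x).differentiableAt
    exact hdiff.continuous
  have hEc : Continuous E := Real.continuous_exp.comp hQc.neg
  have hQtop : Tendsto Q atTop atTop := Qf_tendsto_atTop hr hrpos hqc hqpos ha hb hcond
  have hQbot : Tendsto Q atBot atBot := Qf_tendsto_atBot hr hrpos hqc hqpos ha hb hcond
  have hEtop : Tendsto E atTop (nhds 0) :=
    Real.tendsto_exp_atBot.comp (tendsto_neg_atTop_atBot.comp hQtop)
  -- global positive lower bound for q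
  obtain ⟨μ, hμpos, hμ⟩ : ∃ μ : ℝ, 0 < μ ∧ ∀ x, μ ≤ q x := by
    obtain ⟨X₁, hX₁⟩ := (hT.eventually_ge_atTop 1).exists_forall_of_atTop
    obtain ⟨X₀, hX₀⟩ := eventually_atBot.1 (hB.eventually_ge_atTop 1)
    rcases le_or_gt X₀ X₁ with hcase | hcase
    · obtain ⟨t₀, ht₀mem, ht₀⟩ := isCompact_Icc.exists_isMinOn (Set.nonempty_Icc.2 hcase)
        hqc.continuousOn
      refine ⟨min 1 (q t₀), lt_min one_pos (hqpos t₀), fun x => ?_⟩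
      rcases le_or_gt x X₀ with h | h
      · exact le_trans (min_le_left _ _) (hX₀ x h)
      rcases le_or_gt x X₁ with h' | h'
      · exact le_trans (min_le_right _ _) (ht₀ ⟨h.le, h'⟩)
      · exact le_trans (min_le_left _ _) (hX₁ x h'.le)
    · refine ⟨1, one_pos, fun x => ?_⟩
      rcases le_or_gt x X₀ with h | h
      · exact hX₀ x h
      · exact hX₁ x (by linarith)
  -- the function h = E·q/r is the negative derivative of E, integrable on rays
  set h : ℝ → ℝ := fun t => E t * (q t / r t) with hhdef
  have hhc : Continuous h := hEc.mul (cont_qr hr hrpos hqc)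
  have hhpos : ∀ t, 0 < h t := fun t =>
    mul_pos (hEpos t) (div_pos (hqpos t) (hrpos t))
  have hEderiv : ∀ s, HasDerivAt (fun u => -(E u)) (h s) s := by
    intro s
    have := (E_hasDerivAt hr hrpos hqc hqpos s).neg
    simpa [hhdef, hEdef, hQdef, mul_comm, Pi.neg_def] using this
  have hInt : ∀ x, IntegrableOn h (Ioi x) := by
    intro x
    exact integrableOn_Ioi_deriv_of_nonneg' (fun s _ => hEderiv s)
      (fun s _ => (hhpos s).le) (by simpa using hEtop.neg)
  have hIntVal : ∀ x, ∫ t in Ioi x, h t = E x := by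
    intro x
    have := integral_Ioi_of_hasDerivAt_of_nonneg' (a := x) (fun s _ => hEderiv s)
      (fun s _ => (hhpos s).le) (l := 0) (by simpa using hEtop.neg)
    simpa using this
  have hIntIcc : ∀ u v, ∫ t in u..v, h t = E u - E v := by
    intro u v
    have := intervalIntegral.integral_eq_sub_of_hasDerivAt
      (f := fun s => -(E s)) (f' := h) (fun t _ => hEderiv t)
      (hhc.intervalIntegrable u v)
    rw [this]; ring
  refine ⟨1/μ, by positivity, ?_⟩
  intro f hf ⟨M0, hM0⟩
  set B : ℝ := ⨆ t, |f t| with hBdef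
  have hBdd : BddAbove (Set.range fun t => |f t|) := ⟨M0, by rintro _ ⟨t, rfl⟩; exact hM0 t⟩
  have hfB : ∀ t, |f t| ≤ B := fun t => le_ciSup hBdd t
  have hB0 : 0 ≤ B := le_trans (abs_nonneg _) (hfB 0)
  set g : ℝ → ℝ := fun t => E t * (f t / r t) with hgdef
  have hgc : Continuous g := hEc.mul (hf.div hr fun t => (hrpos t).ne')
  have hgabs : ∀ ν : ℝ, 0 < ν → ∀ t, ν ≤ q t → |g t| ≤ (B/ν) * h t := by
    intro ν hν t hqt
    have h1 : |g t| = E t * (|f t| / r t) := by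
      rw [hgdef]
      rw [abs_mul, abs_of_pos (hEpos t), abs_div, abs_of_pos (hrpos t)]
    rw [h1, hhdef]
    have h2 : |f t| / r t ≤ (B/ν) * (q t / r t) := by
      rw [div_le_iff₀ (hrpos t)]
      have h3 : |f t| ≤ (B/ν) * q t := by
        have h4 : |f t| ≤ B := hfB t
        have h5 : (B/ν) * ν ≤ (B/ν) * q t :=
          mul_le_mul_of_nonneg_left hqt (by positivity)
        rw [div_mul_cancel₀] at h5
        · linarith
        · exact hν.ne'
      have hν' : ν ≠ 0 := hν.ne'
      have hrt : r t ≠ 0 := (hrpos t).ne'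
      calc |f t| ≤ (B/ν) * q t := h3
        _ = B/ν * (q t / r t) * r t := by
            rw [mul_assoc, div_mul_cancel₀ _ hrt]
    calc E t * (|f t| / r t) ≤ E t * ((B/ν) * (q t / r t)) :=
          mul_le_mul_of_nonneg_left h2 (hEpos t).le
      _ = B/ν * (E t * (q t / r t)) := by ring
  have hgInt : ∀ x, IntegrableOn g (Ioi x) := by
    intro x
    apply Integrable.mono' (((hInt x).const_mul (B/μ)))
      hgc.aestronglyMeasurable
    filter_upwards [ae_restrict_mem measurableSet_Ioi] with t _
    rw [Real.norm_eq_abs]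
    exact hgabs μ hμpos t (hμ t)
  set C : ℝ → ℝ := fun x => ∫ t in Ioi x, g t with hCdef
  have htail : ∀ ν : ℝ, 0 < ν → ∀ x, (∀ t, x ≤ t → ν ≤ q t) → |C x| ≤ B/ν * E x := by
    intro ν hν x hq'
    have h1 : |C x| ≤ ∫ t in Ioi x, |g t| := by
      rw [hCdef]
      simpa [Real.norm_eq_abs] using norm_integral_le_integral_norm (μ := volume.restrict (Ioi x)) g
    have h2 : ∫ t in Ioi x, |g t| ≤ ∫ t in Ioi x, (B/ν) * h t := by
      apply setIntegral_mono_on ((hgInt x).abs) (((hInt x)).const_mul (B/ν)) measurableSet_Ioi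
      intro t ht
      exact hgabs ν hν t (hq' t (le_of_lt ht))
    have h3 : ∫ t in Ioi x, (B/ν) * h t = (B/ν) * E x := by
      rw [MeasureTheory.integral_const_mul, hIntVal x]
    linarith
  have hCdiff : ∀ u v : ℝ, u ≤ v → C u = (∫ t in u..v, g t) + C v := by
    intro u v huv
    rw [hCdef]
    simp only
    rw [intervalIntegral.integral_of_le huv]
    rw [← setIntegral_union (Set.Ioc_disjoint_Ioi le_rfl) measurableSet_Ioi
      ((hgInt u).mono_set Set.Ioc_subset_Ioi_self) (hgInt v)]
    rw [Set.Ioc_union_Ioi_eq_Ioi huv]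
  have hCrep : ∀ x, C x = C 0 - ∫ t in (0:ℝ)..x, g t := by
    intro x
    rcases le_total 0 x with hx | hx
    · have := hCdiff 0 x hx
      linarith
    · have := hCdiff x 0 hx
      rw [intervalIntegral.integral_symm]
      linarith
  have hCderiv : ∀ x, HasDerivAt C (-(g x)) x := by
    intro x
    have hd : HasDerivAt (fun v => ∫ t in (0:ℝ)..v, g t) (g x) x :=
      intervalIntegral.integral_hasDerivAt_right (hgc.intervalIntegrable 0 x)
        hgc.stronglyMeasurable.stronglyMeasurableAtFilter hgc.continuousAt
    have hd2 := (hd.const_sub (C 0))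
    have hd3 : HasDerivAt (fun v => C 0 - ∫ t in (0:ℝ)..v, g t) (-(g x)) x := hd2
    exact hd3.congr_of_eventuallyEq (Filter.Eventually.of_forall fun v => hCrep v)
  set y : ℝ → ℝ := fun x => Real.exp (Q x) * C x with hydef
  have hEQ : ∀ x, Real.exp (Q x) * E x = 1 := by
    intro x
    rw [hEdef]
    simp only
    rw [← Real.exp_add]
    simp
  have hyderiv : ∀ x, HasDerivAt y ((q x * y x - f x) / r x) x := by
    intro x
    have hQd : HasDerivAt (fun s => Real.exp (Q s)) (Real.exp (Q x) * (q x / r x)) x := by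
      have := (Qf_hasDerivAt hr hrpos hqc x).exp
      simpa [hQdef, mul_comm] using this
    have hprod := hQd.mul (hCderiv x)
    have hfr : Real.exp (Q x) * (E x * (f x / r x)) = f x / r x := by
      rw [← mul_assoc, hEQ x, one_mul]
    have hrx : r x ≠ 0 := (hrpos x).ne'
    have harith : Real.exp (Q x) * (q x / r x) * C x + Real.exp (Q x) * -(E x * (f x / r x)) =
        (q x * (Real.exp (Q x) * C x) - f x) / r x := by
      rw [mul_neg, hfr]
      field_simp
      ring
    have hy_eq : (q x * y x - f x) / r x =
        (q x * (Real.exp (Q x) * C x) - f x) / r x := by rw [hydef]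
    rw [hy_eq, ← harith]
    exact hprod
  have ycont : Continuous y := by
    have : Differentiable ℝ y := fun x => (hyderiv x).differentiableAt
    exact this.continuous
  have yint : ∀ u v : ℝ, y v - y u = ∫ t in u..v, (q t * y t - f t) / r t := by
    intro u v
    have hgc2 : Continuous fun t => (q t * y t - f t) / r t :=
      ((hqc.mul ycont).sub hf).div hr fun t => (hrpos t).ne'
    rw [intervalIntegral.integral_eq_sub_of_hasDerivAt (fun t _ => hyderiv t)
      (hgc2.intervalIntegrable u v)]
  have hyabs : ∀ ν : ℝ, 0 < ν → ∀ x, (∀ t, x ≤ t → ν ≤ q t) → |y x| ≤ B/ν := by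
    intro ν hν x hq'
    have h1 : |y x| = Real.exp (Q x) * |C x| := by
      rw [hydef]
      simp only
      rw [abs_mul, abs_of_pos (Real.exp_pos _)]
    rw [h1]
    calc Real.exp (Q x) * |C x| ≤ Real.exp (Q x) * (B/ν * E x) :=
          mul_le_mul_of_nonneg_left (htail ν hν x hq') (Real.exp_pos _).le
      _ = B/ν * (Real.exp (Q x) * E x) := by ring
      _ = B/ν := by rw [hEQ x, mul_one]
  have ybound : ∀ x, |y x| ≤ 1/μ * B := by
    intro x
    have := hyabs μ hμpos x (fun t _ => hμ t)
    calc |y x| ≤ B/μ := this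
      _ = 1/μ * B := by ring
  have ytop : Tendsto y atTop (nhds 0) := by
    rw [Metric.tendsto_nhds]
    intro ε hε
    set ν : ℝ := B/ε + 1 with hνdef
    have hν : 0 < ν := by positivity
    obtain ⟨X, hX⟩ := (hT.eventually_ge_atTop ν).exists_forall_of_atTop
    filter_upwards [eventually_ge_atTop X] with x hx
    rw [Real.dist_eq, sub_zero]
    have h1 := hyabs ν hν x (fun t ht => hX t (le_trans hx ht))
    have h2 : B/ν < ε := by
      rw [div_lt_iff₀ hν, hνdef]
      have : B/ε * ε = B := div_mul_cancel₀ B hε.ne'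
      nlinarith
    linarith
  have ybot : Tendsto y atBot (nhds 0) := by
    rw [Metric.tendsto_nhds]
    intro ε hε
    set ν : ℝ := 2*B/ε + 1 with hνdef
    have hν : 0 < ν := by positivity
    obtain ⟨m, hm⟩ := eventually_atBot.1 (hB.eventually_ge_atTop ν)
    have hfar : Tendsto (fun x => Real.exp (Q x) * |C m|) atBot (nhds 0) := by
      have h1 : Tendsto (fun x => Real.exp (Q x)) atBot (nhds 0) :=
        Real.tendsto_exp_atBot.comp hQbot
      simpa using h1.mul_const (|C m|)
    have hfar2 : ∀ᶠ x in atBot, Real.exp (Q x) * |C m| < ε/2 := by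
      have := Metric.tendsto_nhds.1 hfar (ε/2) (by positivity)
      filter_upwards [this] with x hx
      rw [Real.dist_eq, sub_zero, abs_of_nonneg (by positivity)] at hx
      exact hx
    filter_upwards [hfar2, eventually_le_atBot m] with x h1 hx
    rw [Real.dist_eq, sub_zero]
    have hsplit : y x = Real.exp (Q x) * (∫ t in x..m, g t) + Real.exp (Q x) * C m := by
      rw [hydef]
      simp only
      rw [hCdiff x m hx]
      ring
    have hI1 : |∫ t in x..m, g t| ≤ B/ν * E x := by
      have hle : ∫ t in x..m, |g t| ≤ ∫ t in x..m, (B/ν) * h t := by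
        apply intervalIntegral.integral_mono_on hx
          ((hgc.abs.intervalIntegrable x m : IntervalIntegrable _ volume _ _))
          ((continuous_const.mul hhc).intervalIntegrable x m)
        intro t ht
        exact hgabs ν hν t (hm t ht.2)
      have habs2 : |∫ t in x..m, g t| ≤ ∫ t in x..m, |g t| := by
        simpa [Real.norm_eq_abs] using
          intervalIntegral.norm_integral_le_integral_norm (f := g) hx
      have hval : ∫ t in x..m, (B/ν) * h t = B/ν * (E x - E m) := by
        rw [intervalIntegral.integral_const_mul, hIntIcc]
      have hEm : 0 < E m := hEpos m
      have : B/ν * (E x - E m) ≤ B/ν * E x := by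
        apply mul_le_mul_of_nonneg_left _ (by positivity)
        linarith
      linarith [hle, habs2, hval ▸ hle]
    have hterm1 : |Real.exp (Q x) * (∫ t in x..m, g t)| ≤ ε/2 := by
      rw [abs_mul, abs_of_pos (Real.exp_pos _)]
      calc Real.exp (Q x) * |∫ t in x..m, g t| ≤ Real.exp (Q x) * (B/ν * E x) :=
            mul_le_mul_of_nonneg_left hI1 (Real.exp_pos _).le
        _ = B/ν * (Real.exp (Q x) * E x) := by ring
        _ = B/ν := by rw [hEQ x, mul_one]
        _ ≤ ε/2 := by
            rw [div_le_iff₀ hν, hνdef]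
            have : 2*B/ε * ε = 2*B := div_mul_cancel₀ (2*B) hε.ne'
            nlinarith
    calc |y x| = |Real.exp (Q x) * (∫ t in x..m, g t) + Real.exp (Q x) * C m| := by
          rw [hsplit]
      _ ≤ |Real.exp (Q x) * (∫ t in x..m, g t)| + |Real.exp (Q x) * C m| := abs_add_le _ _
      _ < ε/2 + ε/2 := by
          apply add_lt_add_of_le_of_lt hterm1
          rw [abs_mul, abs_of_pos (Real.exp_pos _)]
          exact h1
      _ = ε := by ring
  have ysol : IsSolution r q f y := ⟨ycont, fun u v => yint u v, ybot, ytop⟩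
  -- uniqueness
  have huniq : ∀ y' : ℝ → ℝ, IsSolution r q f y' → y' = y := by
    intro y' hy'
    obtain ⟨y'cont, y'int, y'bot, y'top⟩ := hy'
    set z : ℝ → ℝ := fun x => y' x - y x with hzdef
    have zcont : Continuous z := y'cont.sub ycont
    have hzderiv : ∀ x, HasDerivAt z (q x * z x / r x) x := by
      intro x
      have h1 := sol_hasDerivAt hr hrpos hqc hqpos hf y'cont y'int x
      have h2 := (h1.sub (hyderiv x))
      have : (q x * y' x - f x) / r x - (q x * y x - f x) / r x = q x * z x / r x := by
        rw [hzdef]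
        have hrx : r x ≠ 0 := (hrpos x).ne'
        field_simp
        ring
      rw [this] at h2
      exact h2
    set w : ℝ → ℝ := fun x => z x * E x with hwdef
    have hwderiv : ∀ x, HasDerivAt w 0 x := by
      intro x
      have h1 := (hzderiv x).mul (E_hasDerivAt hr hrpos hqc hqpos x)
      have : q x * z x / r x * E x + z x * (-(q x / r x) * E x) = 0 := by
        have hrx : r x ≠ 0 := (hrpos x).ne'
        field_simp
        ring
      rw [this] at h1
      exact h1
    have hwconst : ∀ x, w x = w 0 := by
      intro x
      exact is_const_of_deriv_eq_zero (fun s => (hwderiv s).differentiableAt)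
        (fun s => (hwderiv s).deriv) x 0
    have hz0 : z 0 = 0 := by
      by_contra hz0ne
      have hztop : Tendsto z atTop (nhds 0) := by
        simpa using y'top.sub ytop
      have key : ∀ x, 0 ≤ x → |z 0| ≤ |z x| := by
        intro x hx
        have h1 : |z x| * E x = |z 0| * E 0 := by
          have h0 : z x * E x = z 0 * E 0 := hwconst x
          have h2 : |z x * E x| = |z 0 * E 0| := by rw [h0]
          rwa [abs_mul, abs_mul, abs_of_pos (hEpos x), abs_of_pos (hEpos 0)] at h2
        have hEle : E x ≤ E 0 := by
          rw [hEdef]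
          simp only
          exact Real.exp_le_exp.2 (neg_le_neg (hQmono hx))
        nlinarith [hEpos x, hEpos 0, abs_nonneg (z x), abs_nonneg (z 0),
          mul_le_mul_of_nonneg_left hEle (abs_nonneg (z x))]
      obtain ⟨x, hx1, hx2⟩ := ((Metric.tendsto_nhds.1 hztop (|z 0|)
        (abs_pos.2 hz0ne)).and (eventually_ge_atTop (0:ℝ))).exists
      rw [Real.dist_eq, sub_zero] at hx1
      exact absurd hx1 (not_lt.2 (key x hx2))
    funext x
    have h1 : z x * E x = z 0 * E 0 := hwconst x
    rw [hz0, zero_mul] at h1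
    have h2 : z x = 0 := (mul_eq_zero.1 h1).resolve_right (hEpos x).ne'
    have h3 : y' x - y x = 0 := h2
    linarith
  refine ⟨⟨y, ysol, fun y' hy' => huniq y' hy'⟩, ?_⟩
  intro y' hy' x
  rw [huniq y' hy']
  exact ybound x
end Main



theorem stmt2 (r q : ℝ → ℝ) (hr : Continuous r) (hrpos : ∀ x, 0 < r x)
    (hq : LocallyIntegrable q volume) (hqnn : ∀ x, 0 ≤ q x)
    (hqc : Continuous q) (hqpos : ∀ x, 0 < q x)
    (a b α β : ℝ) (ha : 1 ≤ a) (hb : 0 < b)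
    (hcond : ∀ x, x ∉ Set.Ioo α β → ∀ t, |t - x| ≤ b * r x / q x →
      1 / a ≤ r t / r x ∧ r t / r x ≤ a ∧ 1 / a ≤ q t / q x ∧ q t / q x ≤ a)
    (hγ : a ^ 2 * Real.exp (-b / a ^ 2) ≤ 1 / 3) :
    CorrectlySolvableC r q ↔ (Tendsto q atTop atTop ∧ Tendsto q atBot atTop) := by
  constructor
  · intro hs
    exact forward_dir hr hrpos hqc hqpos ha hb hcond hs
  · rintro ⟨hT, hB⟩
    exact backward_dir hr hrpos hqc hqpos ha hb hcond hT hB
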